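/- The γ-relation of the λ^q-calculus is Church-Rosser: for λ^q-terms M, R, S, if M ↠_γ R and M ↠_γ S, then there exists a λ^q-term T such that R ↠_γ T and S ↠_γ T. -/

import Mathlib

/-- Signs (phases) of the λ^q-calculus. -/
inductive Sign : Type
  | pos : Sign
  | neg : Sign
deriving DecidableEq

/-- λ^q-terms: M ::= Sx | M₁ M₂ | Sλx.M | (M₁, M₂), where S ∈ {+,−} is a
sign, over a countably infinite set of variables. -/
inductive QTerm : Type
  | var : Sign → ℕ → QTerm
  | app : QTerm → QTerm → QTerm
  | lam : Sign → ℕ → QTerm → QTerm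
  | coll : QTerm → QTerm → QTerm

/-- The congruence on λ^q-terms generated by (ClnOrd) M,N ≡ N,M and
(ClnNest) (M,N),P ≡ M,(N,P). -/
inductive CongQ : QTerm → QTerm → Prop
  | refl (M : QTerm) : CongQ M M
  | symm {M N : QTerm} : CongQ M N → CongQ N M
  | trans {M N P : QTerm} : CongQ M N → CongQ N P → CongQ M P
  | app {M M' N N' : QTerm} : CongQ M M' → CongQ N N' → CongQ (.app M N) (.app M' N')
  | lam (s : Sign) (x : ℕ) {M M' : QTerm} : CongQ M M' → CongQ (.lam s x M) (.lam s x M')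
  | coll {M M' N N' : QTerm} : CongQ M M' → CongQ N N' → CongQ (.coll M N) (.coll M' N')
  | ord (M N : QTerm) : CongQ (.coll M N) (.coll N M)
  | nest (M N P : QTerm) : CongQ (.coll (.coll M N) P) (.coll M (.coll N P))

/-- `collOf M [N₁,…,Nₖ]` is the right-associated collection `(M, N₁, …, Nₖ)`. -/
def collOf : QTerm → List QTerm → QTerm
  | M, [] => M
  | M, N :: L => .coll M (collOf N L)

/-- A term is a collection if its outermost constructor is the comma. -/
def IsColl : QTerm → Prop
  | .coll _ _ => True
  | _ => False

/-- The γ-relation of the λ^q-calculus: it relates each application P Q, where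
P is congruent to a collection (M₀,…,M_m) and Q to a collection (N₀,…,N_n)
with at least one of them a proper (more-than-one-element) collection, to the
collection of all applications M_i N_j. -/
inductive GammaQ : QTerm → QTerm → Prop
  | mk (P Q M N : QTerm) (Ms Ns : List QTerm)
      (hP : CongQ P (collOf M Ms)) (hQ : CongQ Q (collOf N Ns))
      (hn : Ms ≠ [] ∨ Ns ≠ []) :
      GammaQ (.app P Q)
        (collOf (.app M N)
          (Ns.map (.app M) ++ Ms.flatMap fun Mi => (N :: Ns).map (.app Mi)))

/-- One-step γ-reduction: the compatible closure of the γ-relation. -/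
inductive StepGQ : QTerm → QTerm → Prop
  | gamma {M N : QTerm} : GammaQ M N → StepGQ M N
  | appL {M M' N : QTerm} : StepGQ M M' → StepGQ (.app M N) (.app M' N)
  | appR {M N N' : QTerm} : StepGQ N N' → StepGQ (.app M N) (.app M N')
  | lam (s : Sign) (x : ℕ) {M M' : QTerm} : StepGQ M M' → StepGQ (.lam s x M) (.lam s x M')
  | collL {M M' N : QTerm} : StepGQ M M' → StepGQ (.coll M N) (.coll M' N)
  | collR {M N N' : QTerm} : StepGQ N N' → StepGQ (.coll M N) (.coll M N')

/-- γ-reduction ↠_γ : the reflexive-transitive closure of one-step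
γ-reduction, on terms considered up to the congruence generated by
(ClnOrd) and (ClnNest). -/
def RedGQ : QTerm → QTerm → Prop :=
  Relation.ReflTransGen (fun M N => StepGQ M N ∨ CongQ M N)

/-- A term is in γ-normal form if it contains no γ-redex. -/
def NoGammaRedexQ : QTerm → Prop
  | .var _ _ => True
  | .lam _ _ M => NoGammaRedexQ M
  | .app P Q => ¬ IsColl P ∧ ¬ IsColl Q ∧ NoGammaRedexQ P ∧ NoGammaRedexQ Q
  | .coll P Q => NoGammaRedexQ P ∧ NoGammaRedexQ Q

/-! ### Auxiliary development -/

open List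

/-- Leaves of the collection spine. -/
def pieces : QTerm → List QTerm
  | .coll a b => pieces a ++ pieces b
  | t => [t]

/-- Build a collection from a nonempty list. -/
def mkc : List QTerm → QTerm
  | [] => .var .pos 0
  | a :: l => collOf a l

lemma mkc_cons (a : QTerm) (l : List QTerm) : mkc (a :: l) = collOf a l := rfl

lemma mkc_cons_cons (a b : QTerm) (l : List QTerm) :
    mkc (a :: b :: l) = .coll a (mkc (b :: l)) := rfl

lemma pieces_ne_nil : ∀ t : QTerm, pieces t ≠ []
  | .var _ _ => by simp [pieces]
  | .app _ _ => by simp [pieces]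
  | .lam _ _ _ => by simp [pieces]
  | .coll a b => by
      simp [pieces]
      exact fun h _ => pieces_ne_nil a h

lemma pieces_eq_singleton : ∀ {t a : QTerm}, pieces t = [a] → t = a := by
  intro t a h
  cases t with
  | coll x y =>
      exfalso
      have h' : pieces x ++ pieces y = [a] := h
      have hlen := congrArg List.length h'
      have hx := List.length_pos_iff.mpr (pieces_ne_nil x)
      have hy := List.length_pos_iff.mpr (pieces_ne_nil y)
      simp [List.length_append] at hlen
      omega
  | var s n => simpa [pieces] using h
  | app p q => simpa [pieces] using h
  | lam s n m => simpa [pieces] using h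

lemma cong_mkc_append : ∀ (l1 l2 : List QTerm), l1 ≠ [] → l2 ≠ [] →
    CongQ (mkc (l1 ++ l2)) (.coll (mkc l1) (mkc l2))
  | [], _, h, _ => absurd rfl h
  | [a], b :: l2, _, _ => by
      cases l2 <;> exact CongQ.refl _
  | a :: c :: l1, b :: l2, _, h2 => by
      have ih := cong_mkc_append (c :: l1) (b :: l2) (by simp) h2
      have : mkc ((a :: c :: l1) ++ b :: l2) = .coll a (mkc ((c :: l1) ++ b :: l2)) := rfl
      rw [this, mkc_cons_cons]
      exact CongQ.trans (CongQ.coll (CongQ.refl a) ih) (CongQ.symm (CongQ.nest _ _ _))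

lemma cong_pieces : ∀ t : QTerm, CongQ t (mkc (pieces t))
  | .var s n => CongQ.refl _
  | .app p q => CongQ.refl _
  | .lam s n m => CongQ.refl _
  | .coll a b => by
      have ih1 := cong_pieces a
      have ih2 := cong_pieces b
      have h := cong_mkc_append (pieces a) (pieces b) (pieces_ne_nil a) (pieces_ne_nil b)
      exact CongQ.trans (CongQ.coll ih1 ih2) (CongQ.symm (by simpa [pieces] using h))

lemma cong_mkc_forall₂ : ∀ {l l' : List QTerm}, List.Forall₂ CongQ l l' → CongQ (mkc l) (mkc l')
  | [], [], _ => CongQ.refl _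
  | a :: l, a' :: l', List.Forall₂.cons h hs => by
      cases hs with
      | nil => exact h
      | cons h2 hs2 =>
          rw [mkc_cons_cons, mkc_cons_cons]
          exact CongQ.coll h (cong_mkc_forall₂ (List.Forall₂.cons h2 hs2))

lemma cong_mkc_perm {l l' : List QTerm} (h : l.Perm l') : CongQ (mkc l) (mkc l') := by
  induction h with
  | nil => exact CongQ.refl _
  | cons x h ih =>
      rename_i l1 l2
      cases l1 with
      | nil => cases h.symm.eq_nil; exact CongQ.refl _
      | cons b t =>
          cases l2 with
          | nil => exact absurd h.eq_nil (by simp)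
          | cons c t2 =>
              rw [mkc_cons_cons, mkc_cons_cons]
              exact CongQ.coll (CongQ.refl x) ih
  | swap x y l =>
      cases l with
      | nil => exact CongQ.ord y x
      | cons c t =>
          rw [mkc_cons_cons, mkc_cons_cons, mkc_cons_cons, mkc_cons_cons]
          exact CongQ.trans (CongQ.symm (CongQ.nest _ _ _))
            (CongQ.trans (CongQ.coll (CongQ.ord y x) (CongQ.refl _)) (CongQ.nest _ _ _))
  | trans _ _ ih1 ih2 => exact CongQ.trans ih1 ih2

/-- Lists related by pointwise congruence followed by a permutation. -/
def LRel (l l' : List QTerm) : Prop :=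
  ∃ m, List.Forall₂ CongQ l m ∧ m.Perm l'

lemma lrel_refl (l : List QTerm) : LRel l l :=
  ⟨l, List.forall₂_same.mpr fun x _ => CongQ.refl x, List.Perm.refl l⟩

lemma lrel_of_perm {l l' : List QTerm} (h : l.Perm l') : LRel l l' :=
  ⟨l, List.forall₂_same.mpr fun x _ => CongQ.refl x, h⟩

lemma lrel_of_forall₂ {l l' : List QTerm} (h : List.Forall₂ CongQ l l') : LRel l l' :=
  ⟨l', h, List.Perm.refl _⟩

lemma forall₂_congq_trans : ∀ {l m n : List QTerm},
    List.Forall₂ CongQ l m → List.Forall₂ CongQ m n → List.Forall₂ CongQ l n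
  | [], [], [], _, _ => List.Forall₂.nil
  | _ :: _, _ :: _, _ :: _, List.Forall₂.cons h1 t1, List.Forall₂.cons h2 t2 =>
      List.Forall₂.cons (CongQ.trans h1 h2) (forall₂_congq_trans t1 t2)

lemma lrel_symm {l l' : List QTerm} (h : LRel l l') : LRel l' l := by
  obtain ⟨m, hF, hP⟩ := h
  have hF' : List.Forall₂ CongQ m l := List.Forall₂.flip (hF.imp fun _ _ h => CongQ.symm h)
  obtain ⟨n, h1, h2⟩ := List.perm_comp_forall₂ hP.symm hF'
  exact ⟨n, h1, h2⟩

lemma lrel_trans {l m n : List QTerm} (h1 : LRel l m) (h2 : LRel m n) : LRel l n := by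
  obtain ⟨a, F1, P1⟩ := h1
  obtain ⟨b, F2, P2⟩ := h2
  obtain ⟨c, F3, P3⟩ := List.perm_comp_forall₂ P1 F2
  exact ⟨c, forall₂_congq_trans F1 F3, P3.trans P2⟩

lemma lrel_append {a b c d : List QTerm} (h1 : LRel a b) (h2 : LRel c d) :
    LRel (a ++ c) (b ++ d) := by
  obtain ⟨m, F1, P1⟩ := h1
  obtain ⟨n, F2, P2⟩ := h2
  exact ⟨m ++ n, List.rel_append F1 F2, P1.append P2⟩

lemma lrel_single {a b : QTerm} (h : CongQ a b) : LRel [a] [b] :=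
  lrel_of_forall₂ (List.Forall₂.cons h List.Forall₂.nil)

lemma cong_mkc_lrel {l l' : List QTerm} (h : LRel l l') : CongQ (mkc l) (mkc l') := by
  obtain ⟨m, hF, hP⟩ := h
  exact CongQ.trans (cong_mkc_forall₂ hF) (cong_mkc_perm hP)

lemma lrel_pieces_of_cong {A B : QTerm} (h : CongQ A B) : LRel (pieces A) (pieces B) := by
  induction h with
  | refl M => exact lrel_refl _
  | symm _ ih => exact lrel_symm ih
  | trans _ _ ih1 ih2 => exact lrel_trans ih1 ih2
  | app h1 h2 _ _ => exact lrel_single (CongQ.app h1 h2)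
  | lam s x h _ => exact lrel_single (CongQ.lam s x h)
  | coll _ _ ih1 ih2 => simpa [pieces] using lrel_append ih1 ih2
  | ord M N => simpa [pieces] using lrel_of_perm (List.perm_append_comm)
  | nest M N P => simp [pieces, List.append_assoc]; exact lrel_refl _

lemma cong_of_lrel_pieces {A B : QTerm} (h : LRel (pieces A) (pieces B)) : CongQ A B :=
  CongQ.trans (cong_pieces A) (CongQ.trans (cong_mkc_lrel h) (CongQ.symm (cong_pieces B)))

/-- Product of two lists of terms, as applications. -/
def qprod (l1 l2 : List QTerm) : List QTerm :=
  l1.flatMap fun a => l2.map (.app a)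

/-- The γ-normal form. -/
def nf : QTerm → QTerm
  | .var s x => .var s x
  | .lam s x m => .lam s x (nf m)
  | .coll a b => .coll (nf a) (nf b)
  | .app p q => mkc (qprod (pieces (nf p)) (pieces (nf q)))

lemma qprod_ne_nil {l1 l2 : List QTerm} (h1 : l1 ≠ []) (h2 : l2 ≠ []) :
    qprod l1 l2 ≠ [] := by
  cases l1 with
  | nil => exact absurd rfl h1
  | cons a t =>
      cases l2 with
      | nil => exact absurd rfl h2
      | cons b t2 => simp [qprod]

lemma pieces_mkc : ∀ {L : List QTerm}, L ≠ [] → pieces (mkc L) = L.flatMap pieces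
  | [], h => absurd rfl h
  | [a], _ => by simp [mkc, collOf]
  | a :: b :: l, _ => by
      rw [mkc_cons_cons]
      have : pieces (QTerm.coll a (mkc (b :: l))) = pieces a ++ pieces (mkc (b :: l)) := rfl
      rw [this, pieces_mkc (by simp : (b :: l) ≠ [])]
      simp

lemma flatMap_pieces_id : ∀ {L : List QTerm}, (∀ x ∈ L, pieces x = [x]) → L.flatMap pieces = L
  | [], _ => rfl
  | a :: l, h => by
      simp only [List.flatMap_cons, h a (by simp)]
      rw [flatMap_pieces_id fun x hx => h x (by simp [hx])]
      rfl

lemma pieces_qprod {l1 l2 : List QTerm} (h1 : l1 ≠ []) (h2 : l2 ≠ []) :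
    pieces (mkc (qprod l1 l2)) = qprod l1 l2 := by
  rw [pieces_mkc (qprod_ne_nil h1 h2)]
  apply flatMap_pieces_id
  intro x hx
  simp only [qprod, List.mem_flatMap, List.mem_map] at hx
  obtain ⟨a, _, b, _, rfl⟩ := hx
  rfl

lemma forall₂_map_app {x y : QTerm} (h : CongQ x y) :
    ∀ {b n : List QTerm}, List.Forall₂ CongQ b n →
      List.Forall₂ CongQ (b.map (.app x)) (n.map (.app y))
  | [], [], _ => List.Forall₂.nil
  | _ :: _, _ :: _, List.Forall₂.cons h1 t1 =>
      List.Forall₂.cons (CongQ.app h h1) (forall₂_map_app h t1)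

lemma forall₂_qprod : ∀ {a m : List QTerm}, List.Forall₂ CongQ a m →
    ∀ {b n : List QTerm}, List.Forall₂ CongQ b n →
      List.Forall₂ CongQ (qprod a b) (qprod m n)
  | [], [], _, _, _, _ => List.Forall₂.nil
  | _ :: _, _ :: _, List.Forall₂.cons h1 t1, b, n, h2 => by
      simp only [qprod, List.flatMap_cons]
      exact List.rel_append (forall₂_map_app h1 h2) (forall₂_qprod t1 h2)

lemma perm_flatMap_outer {α β : Type*} {l1 l2 : List α} (h : l1.Perm l2) (f : α → List β) :
    (l1.flatMap f).Perm (l2.flatMap f) := by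
  induction h with
  | nil => exact List.Perm.refl _
  | cons x _ ih => simpa using ih.append_left (f x)
  | swap x y l =>
      simp only [List.flatMap_cons]
      rw [← List.append_assoc, ← List.append_assoc]
      exact (List.perm_append_comm).append_right _
  | trans _ _ ih1 ih2 => exact ih1.trans ih2

lemma perm_qprod {a m b n : List QTerm} (h1 : a.Perm m) (h2 : b.Perm n) :
    (qprod a b).Perm (qprod m n) := by
  have s1 : (qprod a b).Perm (qprod m b) := perm_flatMap_outer h1 _
  have s2 : (qprod m b).Perm (qprod m n) :=
    List.Perm.flatMap_left m fun x _ => h2.map _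
  exact s1.trans s2

lemma lrel_qprod {a a' b b' : List QTerm} (h1 : LRel a a') (h2 : LRel b b') :
    LRel (qprod a b) (qprod a' b') := by
  obtain ⟨m, F1, P1⟩ := h1
  obtain ⟨n, F2, P2⟩ := h2
  exact ⟨qprod m n, forall₂_qprod F1 F2, perm_qprod P1 P2⟩

lemma flatMap_append_perm' {α β : Type*} (l : List α) (p q : α → List β) :
    (l.flatMap fun x => p x ++ q x).Perm (l.flatMap p ++ l.flatMap q) :=
  (List.flatMap_append_perm l p q).symm

lemma flatMap_comm_perm {α β γ : Type*} (l1 : List α) (l2 : List β) (h : α → β → List γ) :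
    (l1.flatMap fun a => l2.flatMap fun b => h a b).Perm
      (l2.flatMap fun b => l1.flatMap fun a => h a b) := by
  induction l1 with
  | nil => simp
  | cons a t ih =>
      simp only [List.flatMap_cons]
      exact (ih.append_left _).trans (List.flatMap_append_perm l2 (h a) _)

lemma qprod_flat (A B : List QTerm) (f g : QTerm → List QTerm) :
    (qprod (A.flatMap f) (B.flatMap g)).Perm
      (A.flatMap fun a => B.flatMap fun b => qprod (f a) (g b)) := by
  simp only [qprod, List.flatMap_assoc, List.map_flatMap]
  exact List.Perm.flatMap_left A fun a _ => flatMap_comm_perm (f a) B _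

/-- pieces of normal form -/
def nfp (t : QTerm) : List QTerm := pieces (nf t)

lemma nfp_ne_nil (t : QTerm) : nfp t ≠ [] := pieces_ne_nil _

lemma nfp_app (p q : QTerm) : nfp (.app p q) = qprod (nfp p) (nfp q) := by
  show pieces (mkc (qprod (pieces (nf p)) (pieces (nf q)))) = _
  exact pieces_qprod (pieces_ne_nil _) (pieces_ne_nil _)

lemma nfp_cong {A B : QTerm} (h : CongQ A B) : LRel (nfp A) (nfp B) := by
  induction h with
  | refl M => exact lrel_refl _
  | symm _ ih => exact lrel_symm ih
  | trans _ _ ih1 ih2 => exact lrel_trans ih1 ih2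
  | app _ _ ih1 ih2 =>
      rw [nfp_app, nfp_app]; exact lrel_qprod ih1 ih2
  | lam s x _ ih =>
      exact lrel_single (CongQ.lam s x (cong_of_lrel_pieces ih))
  | coll _ _ ih1 ih2 =>
      show LRel (pieces (.coll (nf _) (nf _))) (pieces (.coll (nf _) (nf _)))
      simpa [pieces, nfp] using lrel_append ih1 ih2
  | ord M N =>
      show LRel (pieces (.coll (nf M) (nf N))) (pieces (.coll (nf N) (nf M)))
      simpa [pieces] using lrel_of_perm (List.perm_append_comm)
  | nest M N P =>
      show LRel (pieces (.coll (.coll (nf M) (nf N)) (nf P)))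
        (pieces (.coll (nf M) (.coll (nf N) (nf P))))
      simp [pieces, List.append_assoc]
      exact lrel_refl _

lemma nf_cong {A B : QTerm} (h : CongQ A B) : CongQ (nf A) (nf B) :=
  cong_of_lrel_pieces (nfp_cong h)

lemma nf_mkc_map : ∀ {L : List QTerm}, L ≠ [] → nf (mkc L) = mkc (L.map nf)
  | [], h => absurd rfl h
  | [a], _ => rfl
  | a :: b :: l, _ => by
      rw [mkc_cons_cons]
      show QTerm.coll (nf a) (nf (mkc (b :: l))) = _
      rw [nf_mkc_map (by simp : (b :: l) ≠ [])]
      rfl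

lemma nfp_mkc {L : List QTerm} (h : L ≠ []) : nfp (mkc L) = L.flatMap nfp := by
  show pieces (nf (mkc L)) = _
  rw [nf_mkc_map h, pieces_mkc (by simpa using h), List.flatMap_map]
  rfl

lemma nfp_step {M N : QTerm} (h : StepGQ M N) : LRel (nfp M) (nfp N) := by
  induction h with
  | appL _ ih => rw [nfp_app, nfp_app]; exact lrel_qprod ih (lrel_refl _)
  | appR _ ih => rw [nfp_app, nfp_app]; exact lrel_qprod (lrel_refl _) ih
  | lam s x _ ih => exact lrel_single (CongQ.lam s x (cong_of_lrel_pieces ih))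
  | collL _ ih =>
      show LRel (pieces (.coll (nf _) (nf _))) (pieces (.coll (nf _) (nf _)))
      simpa [pieces, nfp] using lrel_append ih (lrel_refl _)
  | collR _ ih =>
      show LRel (pieces (.coll (nf _) (nf _))) (pieces (.coll (nf _) (nf _)))
      simpa [pieces, nfp] using lrel_append (lrel_refl _) ih
  | gamma hg =>
      obtain ⟨P, Q, M0, N0, Ms, Ns, hP, hQ, hn⟩ := hg
      -- target term equals mkc (qprod (M0::Ms) (N0::Ns))
      have htarget : (collOf (.app M0 N0)
          (Ns.map (.app M0) ++ Ms.flatMap fun Mi => (N0 :: Ns).map (.app Mi)))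
          = mkc (qprod (M0 :: Ms) (N0 :: Ns)) := by
        simp [qprod, mkc]
      rw [nfp_app, htarget]
      have hP' : LRel (nfp P) ((M0 :: Ms).flatMap nfp) := by
        have := nfp_cong (show CongQ P (mkc (M0 :: Ms)) from hP)
        rwa [nfp_mkc (by simp)] at this
      have hQ' : LRel (nfp Q) ((N0 :: Ns).flatMap nfp) := by
        have := nfp_cong (show CongQ Q (mkc (N0 :: Ns)) from hQ)
        rwa [nfp_mkc (by simp)] at this
      have h1 : LRel (qprod (nfp P) (nfp Q))
          (qprod ((M0 :: Ms).flatMap nfp) ((N0 :: Ns).flatMap nfp)) :=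
        lrel_qprod hP' hQ'
      have h2 := qprod_flat (M0 :: Ms) (N0 :: Ns) nfp nfp
      have h3 : nfp (mkc (qprod (M0 :: Ms) (N0 :: Ns)))
          = (M0 :: Ms).flatMap fun Mi => (N0 :: Ns).flatMap fun Nj => qprod (nfp Mi) (nfp Nj) := by
        rw [nfp_mkc (qprod_ne_nil (by simp) (by simp))]
        simp only [qprod, List.flatMap_assoc, List.flatMap_map]
        have : ∀ x a : QTerm, nfp (x.app a) = (nfp x).flatMap fun y => List.map y.app (nfp a) := fun x a => nfp_app x a
        simp only [this]
      rw [h3]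
      exact lrel_trans h1 (lrel_of_perm h2)

lemma redgq_lift {f : QTerm → QTerm}
    (hs : ∀ {a b : QTerm}, StepGQ a b → StepGQ (f a) (f b))
    (hc : ∀ {a b : QTerm}, CongQ a b → CongQ (f a) (f b))
    {a b : QTerm} (h : RedGQ a b) : RedGQ (f a) (f b) := by
  induction h with
  | refl => exact Relation.ReflTransGen.refl
  | tail _ h2 ih => exact ih.tail (h2.imp hs hc)

lemma red_appL {P P' Q : QTerm} (h : RedGQ P P') : RedGQ (.app P Q) (.app P' Q) :=
  redgq_lift (fun hs => StepGQ.appL hs) (fun hc => CongQ.app hc (CongQ.refl Q)) h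

lemma red_appR {P Q Q' : QTerm} (h : RedGQ Q Q') : RedGQ (.app P Q) (.app P Q') :=
  redgq_lift (fun hs => StepGQ.appR hs) (fun hc => CongQ.app (CongQ.refl P) hc) h

lemma red_collL {P P' Q : QTerm} (h : RedGQ P P') : RedGQ (.coll P Q) (.coll P' Q) :=
  redgq_lift (fun hs => StepGQ.collL hs) (fun hc => CongQ.coll hc (CongQ.refl Q)) h

lemma red_collR {P Q Q' : QTerm} (h : RedGQ Q Q') : RedGQ (.coll P Q) (.coll P Q') :=
  redgq_lift (fun hs => StepGQ.collR hs) (fun hc => CongQ.coll (CongQ.refl P) hc) h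

lemma red_lam {s x} {P P' : QTerm} (h : RedGQ P P') : RedGQ (.lam s x P) (.lam s x P') :=
  redgq_lift (fun hs => StepGQ.lam s x hs) (fun hc => CongQ.lam s x hc) h

lemma red_nf : ∀ M : QTerm, RedGQ M (nf M)
  | .var s x => Relation.ReflTransGen.refl
  | .lam s x m => red_lam (red_nf m)
  | .coll a b => (red_collL (red_nf a)).trans (red_collR (red_nf b))
  | .app p q => by
      have h0 : RedGQ (.app p q) (.app (nf p) (nf q)) :=
        (red_appL (red_nf p)).trans (red_appR (red_nf q))
      obtain ⟨M0, Ms, hMs⟩ : ∃ a l, pieces (nf p) = a :: l := by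
        cases hp : pieces (nf p) with
        | nil => exact absurd hp (pieces_ne_nil _)
        | cons a l => exact ⟨a, l, rfl⟩
      obtain ⟨N0, Ns, hNs⟩ : ∃ a l, pieces (nf q) = a :: l := by
        cases hq : pieces (nf q) with
        | nil => exact absurd hq (pieces_ne_nil _)
        | cons a l => exact ⟨a, l, rfl⟩
      by_cases hdeg : Ms = [] ∧ Ns = []
      · -- no redex: nf (app p q) = app (nf p) (nf q)
        obtain ⟨h1, h2⟩ := hdeg
        subst h1; subst h2
        have e1 : nf p = M0 := pieces_eq_singleton hMs
        have e2 : nf q = N0 := pieces_eq_singleton hNs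
        have : nf (.app p q) = .app (nf p) (nf q) := by
          show mkc (qprod (pieces (nf p)) (pieces (nf q))) = _
          rw [hMs, hNs, e1, e2]
          rfl
        rw [this]; exact h0
      · have hn : Ms ≠ [] ∨ Ns ≠ [] := by
          rcases eq_or_ne Ms [] with h1 | h1
          · exact Or.inr fun h2 => hdeg ⟨h1, h2⟩
          · exact Or.inl h1
        have hP : CongQ (nf p) (collOf M0 Ms) := by
          have := cong_pieces (nf p); rwa [hMs] at this
        have hQ : CongQ (nf q) (collOf N0 Ns) := by
          have := cong_pieces (nf q); rwa [hNs] at this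
        have hg := GammaQ.mk (nf p) (nf q) M0 N0 Ms Ns hP hQ hn
        have htarget : (collOf (.app M0 N0)
            (Ns.map (.app M0) ++ Ms.flatMap fun Mi => (N0 :: Ns).map (.app Mi)))
            = nf (.app p q) := by
          show _ = mkc (qprod (pieces (nf p)) (pieces (nf q)))
          rw [hMs, hNs]
          simp [qprod, mkc]
        exact h0.tail (Or.inl (htarget ▸ StepGQ.gamma hg))

lemma nf_red {M R : QTerm} (h : RedGQ M R) : CongQ (nf M) (nf R) := by
  induction h with
  | refl => exact CongQ.refl _
  | tail _ h2 ih =>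
      refine CongQ.trans ih ?_
      rcases h2 with hs | hc
      · exact cong_of_lrel_pieces (nfp_step hs)
      · exact nf_cong hc

/-- The γ-relation of the λ^q-calculus is Church-Rosser: for λ^q-terms
M, R, S, if M ↠_γ R and M ↠_γ S, then there exists a λ^q-term T such that
R ↠_γ T and S ↠_γ T. -/
theorem gammaQ_church_rosser (M R S : QTerm) (hR : RedGQ M R) (hS : RedGQ M S) :
    ∃ T : QTerm, RedGQ R T ∧ RedGQ S T := by
  refine ⟨nf M, ?_, ?_⟩
  · exact (red_nf R).tail (Or.inr (CongQ.symm (nf_red hR)))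
  · exact (red_nf S).tail (Or.inr (CongQ.symm (nf_red hS)))
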